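/- Set C₁ = C₂ = C₃ = −1 in the secular spin ODE system and let C₄ ∈ ℝ. Then: (a) the point (X,h) = (0, π) is an equilibrium of the system for every value of C₄; (b) the Jacobian matrix of the vector field at (0, π) equals [[0, −4], [2 + 2·C₄, 0]], whose determinant is 8·(1 + C₄); consequently (c) the linearization at (0,π) has a pair of purely imaginary nonzero eigenvalues (linear center) when C₄ > −1, a pair of real nonzero eigenvalues of opposite sign (saddle) when C₄ < −1, and is degenerate (zero determinant) exactly at C₄ = −1. -/

import Mathlib

/-- With `C₁ = C₂ = C₃ = −1` in the secular spin ODE system: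
(a) `(0, π)` is an equilibrium for every `C₄`;
(b) the Jacobian of the vector field at `(0, π)` is `[[0, −4], [2+2C₄, 0]]`,
with determinant `8(1+C₄)`;
(c) the linearization has a purely imaginary nonzero pair of eigenvalues
(linear center) when `C₄ > −1`, a real pair of opposite signs (saddle) when
`C₄ < −1`, and is degenerate (zero determinant) exactly when `C₄ = −1`. -/
theorem stmt_9 (C₄ : ℝ)
    (f₁ f₂ : ℝ → ℝ → ℝ)
    (hf₁ : ∀ X h, f₁ X h = Real.sin h * ((-1) * X * Real.sqrt (1 - X ^ 2)
      + 4 * (-1) * Real.cos h * (1 - X ^ 2)))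
    (hf₂ : ∀ X h, f₂ X h =
      (-1) * Real.cos h * (1 - 2 * X ^ 2) / Real.sqrt (1 - X ^ 2)
        - 2 * (-1) * X * Real.cos (2 * h) + (-1) + 2 * C₄ * X)
    (J : Matrix (Fin 2) (Fin 2) ℝ)
    (hJ : J = !![deriv (fun X => f₁ X Real.pi) 0, deriv (fun h => f₁ 0 h) Real.pi;
                 deriv (fun X => f₂ X Real.pi) 0, deriv (fun h => f₂ 0 h) Real.pi]) :
    -- (a) equilibrium for every C₄
    (f₁ 0 Real.pi = 0 ∧ f₂ 0 Real.pi = 0)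
    -- (b) Jacobian and its determinant
    ∧ J = !![(0 : ℝ), -4; 2 + 2 * C₄, 0]
    ∧ J.det = 8 * (1 + C₄)
    -- (c) spectral classification of the linearization
    ∧ (C₄ > -1 → ∃ ω : ℝ, 0 < ω ∧ ∀ μ : ℂ,
        Matrix.det (μ • (1 : Matrix (Fin 2) (Fin 2) ℂ)
            - !![(0 : ℂ), -4; 2 + 2 * (C₄ : ℂ), 0]) = 0
          ↔ (μ = Complex.I * ω ∨ μ = -(Complex.I * ω)))
    ∧ (C₄ < -1 → ∃ r : ℝ, 0 < r ∧ ∀ μ : ℂ,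
        Matrix.det (μ • (1 : Matrix (Fin 2) (Fin 2) ℂ)
            - !![(0 : ℂ), -4; 2 + 2 * (C₄ : ℂ), 0]) = 0
          ↔ (μ = (r : ℂ) ∨ μ = -(r : ℂ)))
    ∧ (J.det = 0 ↔ C₄ = -1) := by
  -- Jacobian entries
  have e11 : deriv (fun X => f₁ X Real.pi) 0 = 0 := by
    have hfun : (fun X => f₁ X Real.pi) = fun _ : ℝ => (0 : ℝ) := by
      funext X; simp [hf₁]
    rw [hfun]; simp
  have e12 : deriv (fun h => f₁ 0 h) Real.pi = -4 := by
    have hfun : (fun h => f₁ 0 h) = fun h => Real.sin h * (-4 * Real.cos h) := by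
      funext h; rw [hf₁]; norm_num
    have hd : HasDerivAt (fun h => Real.sin h * (-4 * Real.cos h))
        (Real.cos Real.pi * (-4 * Real.cos Real.pi)
          + Real.sin Real.pi * (-4 * -Real.sin Real.pi)) Real.pi :=
      (Real.hasDerivAt_sin Real.pi).mul ((Real.hasDerivAt_cos Real.pi).const_mul (-4))
    rw [hfun, hd.deriv]
    simp [Real.cos_pi, Real.sin_pi]
  have e21 : deriv (fun X => f₂ X Real.pi) 0 = 2 + 2 * C₄ := by
    have hfun : (fun X => f₂ X Real.pi)
        = fun X => (1 - 2 * X ^ 2) / Real.sqrt (1 - X ^ 2) + (2 * X + (-1) + 2 * C₄ * X) := by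
      funext X; rw [hf₂]; rw [Real.cos_pi, Real.cos_two_pi]; ring
    have h1 : HasDerivAt (fun X : ℝ => 1 - X ^ 2) 0 0 := by
      simpa using (hasDerivAt_pow 2 (0 : ℝ)).const_sub 1
    have hs : HasDerivAt (fun X : ℝ => Real.sqrt (1 - X ^ 2)) 0 0 := by
      have := (Real.hasDerivAt_sqrt (by norm_num : (1 : ℝ) - 0 ^ 2 ≠ 0)).comp 0 h1
      simpa [Function.comp_def] using this
    have hn : HasDerivAt (fun X : ℝ => 1 - 2 * X ^ 2) 0 0 := by
      simpa using ((hasDerivAt_pow 2 (0 : ℝ)).const_mul 2).const_sub 1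
    have hsne : Real.sqrt (1 - (0 : ℝ) ^ 2) ≠ 0 := by
      norm_num
    have hd : HasDerivAt (fun X : ℝ => (1 - 2 * X ^ 2) / Real.sqrt (1 - X ^ 2)) 0 0 := by
      simpa [Pi.div_def] using hn.div hs hsne
    have hrest : HasDerivAt (fun X : ℝ => 2 * X + (-1) + 2 * C₄ * X) (2 + 2 * C₄) 0 := by
      have h2 : HasDerivAt (fun X : ℝ => 2 * X + (-1)) 2 0 := by
        simpa using ((hasDerivAt_id (0 : ℝ)).const_mul 2).add_const (-1)
      have h3 : HasDerivAt (fun X : ℝ => 2 * C₄ * X) (2 * C₄) 0 := by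
        simpa using (hasDerivAt_id (0 : ℝ)).const_mul (2 * C₄)
      simpa [Pi.add_def] using h2.add h3
    have H : HasDerivAt (fun X : ℝ => (1 - 2 * X ^ 2) / Real.sqrt (1 - X ^ 2) + (2 * X + (-1) + 2 * C₄ * X)) (0 + (2 + 2 * C₄)) 0 := hd.add hrest
    rw [hfun, H.deriv]
    ring
  have e22 : deriv (fun h => f₂ 0 h) Real.pi = 0 := by
    have hfun : (fun h => f₂ 0 h) = fun h => -Real.cos h + (-1) := by
      funext h; rw [hf₂]; simp
    have hd : HasDerivAt (fun h : ℝ => -Real.cos h + (-1)) (Real.sin Real.pi) Real.pi := by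
      simpa using (Real.hasDerivAt_cos Real.pi).neg.add_const (-1)
    rw [hfun, hd.deriv, Real.sin_pi]
  have hJval : J = !![(0 : ℝ), -4; 2 + 2 * C₄, 0] := by
    rw [hJ, e11, e12, e21, e22]
  have hdet : J.det = 8 * (1 + C₄) := by
    rw [hJval, Matrix.det_fin_two_of]; ring
  -- characteristic polynomial
  have key : ∀ μ : ℂ, Matrix.det (μ • (1 : Matrix (Fin 2) (Fin 2) ℂ)
      - !![(0 : ℂ), -4; 2 + 2 * (C₄ : ℂ), 0]) = μ ^ 2 + (8 + 8 * (C₄ : ℂ)) := by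
    intro μ
    rw [Matrix.det_fin_two]
    simp [Matrix.smul_apply, Matrix.one_apply]
    ring
  refine ⟨⟨by simp [hf₁], by simp [hf₂]⟩, hJval, hdet, ?_, ?_, ?_⟩
  · intro hgt
    have hpos : (0 : ℝ) < 8 + 8 * C₄ := by linarith
    refine ⟨Real.sqrt (8 + 8 * C₄), Real.sqrt_pos.mpr hpos, fun μ => ?_⟩
    have hz : (Complex.I * (Real.sqrt (8 + 8 * C₄) : ℂ)) ^ 2 = -(8 + 8 * (C₄ : ℂ)) := by
      have hsq : ((Real.sqrt (8 + 8 * C₄) : ℝ) : ℂ) ^ 2 = ((8 + 8 * C₄ : ℝ) : ℂ) := by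
        rw [← Complex.ofReal_pow, Real.sq_sqrt hpos.le]
      rw [mul_pow, Complex.I_sq, hsq]
      push_cast
      ring
    rw [key μ, show μ ^ 2 + (8 + 8 * (C₄ : ℂ))
        = (μ - Complex.I * (Real.sqrt (8 + 8 * C₄) : ℂ))
          * (μ + Complex.I * (Real.sqrt (8 + 8 * C₄) : ℂ)) by linear_combination hz]
    rw [mul_eq_zero, sub_eq_zero, add_eq_zero_iff_eq_neg]
  · intro hlt
    have hpos : (0 : ℝ) < -(8 + 8 * C₄) := by linarith
    refine ⟨Real.sqrt (-(8 + 8 * C₄)), Real.sqrt_pos.mpr hpos, fun μ => ?_⟩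
    have hz : ((Real.sqrt (-(8 + 8 * C₄)) : ℝ) : ℂ) ^ 2 = -(8 + 8 * (C₄ : ℂ)) := by
      rw [← Complex.ofReal_pow, Real.sq_sqrt hpos.le]
      push_cast
      ring
    rw [key μ, show μ ^ 2 + (8 + 8 * (C₄ : ℂ))
        = (μ - (Real.sqrt (-(8 + 8 * C₄)) : ℂ)) * (μ + (Real.sqrt (-(8 + 8 * C₄)) : ℂ)) by
          linear_combination hz]
    rw [mul_eq_zero, sub_eq_zero, add_eq_zero_iff_eq_neg]
  · rw [hdet]
    constructor
    · intro h; linarith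
    · intro h; rw [h]; ring
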